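/- Let F be a group, y₁, …, y_r elements of F, and R the normal closure of {y₁, …, y_r} in F. Then the commutator subgroup [F,R] equals the subgroup of F generated by the set of all elements (f₁⁻¹ y_j⁻¹ f₁)(f₂⁻¹ y_j f₂) with 1 ≤ j ≤ r and f₁, f₂ ∈ F. -/

import Mathlib

open scoped commutatorElement

/-- Let `F` be a group, `y₁, …, y_r ∈ F` and `R` the normal closure of `{y₁, …, y_r}` in `F`.
Then `[F,R]` equals the subgroup generated by all `(f₁⁻¹ y_j⁻¹ f₁)(f₂⁻¹ y_j f₂)`
with `1 ≤ j ≤ r`, `f₁ f₂ ∈ F`. -/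
theorem commutator_normalClosure_eq_closure {F : Type*} [Group F] (r : ℕ) (y : Fin r → F) :
    ⁅(⊤ : Subgroup F), Subgroup.normalClosure (Set.range y)⁆ =
      Subgroup.closure
        {x : F | ∃ (j : Fin r) (f₁ f₂ : F),
          x = (f₁⁻¹ * (y j)⁻¹ * f₁) * (f₂⁻¹ * y j * f₂)} := by
  set S : Set F := {x : F | ∃ (j : Fin r) (f₁ f₂ : F),
      x = (f₁⁻¹ * (y j)⁻¹ * f₁) * (f₂⁻¹ * y j * f₂)} with hS
  set K := Subgroup.closure S with hK
  -- K is normal, since S is conjugation-invariant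
  have hKnormal : K.Normal := by
    constructor
    intro x hx g
    induction hx using Subgroup.closure_induction with
    | mem z hz =>
        obtain ⟨j, f₁, f₂, rfl⟩ := hz
        apply Subgroup.subset_closure
        refine ⟨j, f₁ * g⁻¹, f₂ * g⁻¹, ?_⟩
        group
    | one => simpa using K.one_mem
    | mul a b _ _ ha hb =>
        have := K.mul_mem ha hb
        simpa [mul_assoc] using this
    | inv a _ ha =>
        have := K.inv_mem ha
        simpa [mul_assoc] using this
  apply le_antisymm
  · rw [Subgroup.commutator_le]
    intro f _ n hn
    induction hn using Subgroup.closure_induction with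
    | mem z hz =>
        obtain ⟨a, ha, hconj⟩ := Group.mem_conjugatesOfSet_iff.1 hz
        obtain ⟨j, rfl⟩ := ha
        obtain ⟨g, rfl⟩ := isConj_iff.1 hconj
        have hs : ((g⁻¹ * f⁻¹)⁻¹ * (y j)⁻¹ * (g⁻¹ * f⁻¹)) * (g⁻¹⁻¹ * y j * g⁻¹) ∈ K :=
          Subgroup.subset_closure ⟨j, g⁻¹ * f⁻¹, g⁻¹, rfl⟩
        have hs' := hKnormal.conj_mem _ (K.inv_mem hs) (g * y j * g⁻¹)
        have : ⁅f, g * y j * g⁻¹⁆ =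
            (g * y j * g⁻¹) *
              (((g⁻¹ * f⁻¹)⁻¹ * (y j)⁻¹ * (g⁻¹ * f⁻¹)) * (g⁻¹⁻¹ * y j * g⁻¹))⁻¹ *
              (g * y j * g⁻¹)⁻¹ := by
          group
        rw [this]
        exact hs'
    | one => simpa using K.one_mem
    | mul a b _ _ ha hb =>
        have h1 : ⁅f, a * b⁆ = ⁅f, a⁆ * (a * ⁅f, b⁆ * a⁻¹) := by group
        rw [h1]
        exact K.mul_mem ha (hKnormal.conj_mem _ hb a)
    | inv a _ ha =>
        have h1 : ⁅f, a⁻¹⁆ = a⁻¹ * ⁅f, a⁆⁻¹ * a⁻¹⁻¹ := by group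
        rw [h1]
        exact hKnormal.conj_mem _ (K.inv_mem ha) a⁻¹
  · rw [hK, Subgroup.closure_le]
    rintro x ⟨j, f₁, f₂, rfl⟩
    have hn : (f₂⁻¹ * y j * f₂)⁻¹ ∈ Subgroup.normalClosure (Set.range y) := by
      refine (Subgroup.normalClosure _).inv_mem ?_
      simpa using Subgroup.normalClosure_normal.conj_mem _
        (Subgroup.subset_normalClosure (Set.mem_range_self j)) f₂⁻¹
    have h1 : (f₁⁻¹ * (y j)⁻¹ * f₁) * (f₂⁻¹ * y j * f₂) =
        ⁅f₁⁻¹ * f₂, (f₂⁻¹ * y j * f₂)⁻¹⁆ := by group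
    rw [h1]
    exact Subgroup.commutator_mem_commutator (Subgroup.mem_top _) hn
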